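/- Let 0 < λ < 1 with k/(k+1) < λ ≤ (k+1)/(k+2) for some k ∈ ℕ, let a, b > 0, s > 0, α ∈ ℝ, and let b_0, ..., b_k be the coefficients defined by the recursion M_0 = ⋯ = M_k = 0 (with b_0 = -2a/(2b)^λ). Define h_n = (2b)^{1/s}·[ln n + (α/s)·ln ln n + Σ_{i=0}^{k} b_i (ln n)^{(i+1)λ-i}]^{-1/s}. Then with r = λs, exp(2b/h_n^s + 2a/h_n^r)·h_n^α = O(n) as n → ∞. -/

import Mathlib

open Real Filter Asymptotics Finset

open Topology

private noncomputable def bcoef (μ : ℝ) (j : ℕ) : ℝ :=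
  (∏ m ∈ Finset.range j, (μ - m)) / (Nat.factorial j)

private def ee (lam : ℝ) (i : ℕ) : ℝ := ((i : ℝ) + 1) * lam - i

private noncomputable def Acoef (lam C : ℝ) (k : ℕ) (c : ℕ → ℝ) (i : ℕ) : ℝ :=
  C * ∑ j ∈ Finset.range (k + 1), bcoef lam j *
    ∑ p ∈ (Fintype.piFinset fun _ : Fin j => Finset.range (k + 1)).filter
        (fun p => ∑ m, (p m + 1) = i), ∏ m, c (p m)

private lemma expand (lam : ℝ) (k : ℕ) (c : ℕ → ℝ) (C : ℝ) (L : ℝ) (hL : 0 < L) :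
    C * L ^ lam * ∑ j ∈ Finset.range (k + 1), bcoef lam j *
        ((∑ i ∈ Finset.range (k + 1), c i * L ^ (ee lam i)) / L) ^ j
      = ∑ i ∈ Finset.range (k * (k + 1) + 1), Acoef lam C k c i * L ^ (ee lam i) := by
  have step1 : C * L ^ lam * ∑ j ∈ Finset.range (k + 1), bcoef lam j *
        ((∑ i ∈ Finset.range (k + 1), c i * L ^ (ee lam i)) / L) ^ j
      = ∑ j ∈ Finset.range (k + 1),
          ∑ p ∈ (Fintype.piFinset fun _ : Fin j => Finset.range (k + 1)),
            (C * bcoef lam j * ∏ m, c (p m)) * L ^ (ee lam (∑ m, (p m + 1))) := by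
    rw [Finset.mul_sum]
    refine Finset.sum_congr rfl fun j _ => ?_
    have hφpow : ((∑ i ∈ Finset.range (k + 1), c i * L ^ (ee lam i))) ^ j
        = ∑ p ∈ (Fintype.piFinset fun _ : Fin j => Finset.range (k + 1)),
            ∏ m, (c (p m) * L ^ (ee lam (p m))) := by
      calc ((∑ i ∈ Finset.range (k + 1), c i * L ^ (ee lam i))) ^ j
          = ∏ _m : Fin j, (∑ i ∈ Finset.range (k + 1), c i * L ^ (ee lam i)) := by
            rw [Finset.prod_const, Finset.card_univ, Fintype.card_fin]
        _ = _ := Finset.prod_univ_sum _ _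
    rw [div_pow, hφpow, Finset.sum_div, Finset.mul_sum, Finset.mul_sum]
    refine Finset.sum_congr rfl fun p _ => ?_
    have hprod : (∏ m, (c (p m) * L ^ (ee lam (p m))))
        = (∏ m, c (p m)) * L ^ (∑ m, ee lam (p m)) := by
      rw [Finset.prod_mul_distrib, Real.rpow_sum_of_pos hL]
    have hX : ((∑ m, (p m + 1) : ℕ) : ℝ) = (∑ m, (p m : ℝ)) + j := by
      push_cast
      rw [Finset.sum_add_distrib]
      simp
    have hE : (∑ m, ee lam (p m)) = lam * ((∑ m, (p m : ℝ)) + j) - (∑ m, (p m : ℝ)) := by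
      unfold ee
      rw [Finset.sum_sub_distrib, ← Finset.sum_mul, Finset.sum_add_distrib]
      simp [mul_comm]
    have hexp : lam + (∑ m, ee lam (p m)) - (j : ℝ) = ee lam (∑ m, (p m + 1)) := by
      rw [hE]; unfold ee; rw [hX]; ring
    have hpow : L ^ lam * L ^ (∑ m, ee lam (p m)) = L ^ (ee lam (∑ m, (p m + 1))) * L ^ (j : ℕ) := by
      rw [← Real.rpow_natCast L j, ← Real.rpow_add hL, ← Real.rpow_add hL, ← hexp]
      ring_nf
    have hLj : (L : ℝ) ^ (j : ℕ) ≠ 0 := pow_ne_zero _ hL.ne'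
    rw [hprod]
    field_simp
    linear_combination (C * bcoef lam j * ∏ m, c (p m)) * hpow
  rw [step1]
  have step2 : ∀ j ∈ Finset.range (k + 1),
      (∑ p ∈ (Fintype.piFinset fun _ : Fin j => Finset.range (k + 1)),
        (C * bcoef lam j * ∏ m, c (p m)) * L ^ (ee lam (∑ m, (p m + 1))))
      = ∑ i ∈ Finset.range (k * (k + 1) + 1),
          ∑ p ∈ (Fintype.piFinset fun _ : Fin j => Finset.range (k + 1)).filter
              (fun p => ∑ m, (p m + 1) = i),
            (C * bcoef lam j * ∏ m, c (p m)) * L ^ (ee lam i) := by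
    intro j hj
    rw [← Finset.sum_fiberwise_of_maps_to (g := fun p => ∑ m, (p m + 1))
      (t := Finset.range (k * (k + 1) + 1)) ?_ _]
    · refine Finset.sum_congr rfl fun i _ => Finset.sum_congr rfl fun p hp => ?_
      rw [(Finset.mem_filter.mp hp).2]
    · intro p hp
      rw [Finset.mem_range]
      have hb : ∀ m, p m + 1 ≤ k + 1 := by
        intro m
        have := (Fintype.mem_piFinset.mp hp) m
        rw [Finset.mem_range] at this
        omega
      have : (∑ m, (p m + 1)) ≤ ∑ _m : Fin j, (k + 1) :=
        Finset.sum_le_sum fun m _ => hb m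
      have hcard : (∑ _m : Fin j, (k + 1)) = j * (k + 1) := by
        rw [Finset.sum_const, Finset.card_univ, Fintype.card_fin, smul_eq_mul]
      have hjk : j ≤ k := by rw [Finset.mem_range] at hj; omega
      calc (∑ m, (p m + 1)) ≤ j * (k + 1) := by rw [← hcard]; exact this
        _ ≤ k * (k + 1) := Nat.mul_le_mul_right _ hjk
        _ < k * (k + 1) + 1 := Nat.lt_succ_self _
  rw [Finset.sum_congr rfl step2, Finset.sum_comm]
  refine Finset.sum_congr rfl fun i _ => ?_
  unfold Acoef
  simp only [← Finset.sum_mul]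
  congr 1
  simp only [Finset.mul_sum, mul_assoc]

private lemma Acoef_eq (lam C : ℝ) (k : ℕ) (c : ℕ → ℝ)
    (hc0 : c 0 = -C)
    (hcrec : ∀ i : ℕ, 1 ≤ i → i ≤ k →
      c i + C * (∑ j ∈ Finset.Icc 1 i, bcoef lam j *
        ∑ p ∈ (Fintype.piFinset fun _ : Fin j => Finset.Icc 1 i).filter
            (fun p => ∑ m, p m = i), ∏ m, c (p m - 1)) = 0) :
    ∀ i ≤ k, Acoef lam C k c i = - c i := by
  intro i hik
  rcases Nat.eq_zero_or_pos i with rfl | hi1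
  · -- i = 0
    unfold Acoef
    rw [Finset.sum_eq_single_of_mem 0 (Finset.mem_range.mpr (Nat.succ_pos k))]
    · have hfilter : ((Fintype.piFinset fun _ : Fin 0 => Finset.range (k + 1)).filter
          (fun p => ∑ m, (p m + 1) = 0))
          = (Fintype.piFinset fun _ : Fin 0 => Finset.range (k + 1)) := by
        refine Finset.filter_true_of_mem fun p _ => by simp
      rw [hfilter]
      have : (∑ p ∈ (Fintype.piFinset fun _ : Fin 0 => Finset.range (k + 1)),
          ∏ m, c (p m)) = 1 := by simp
      rw [this, hc0, bcoef]
      simp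
    · intro j hj hj0
      have : ((Fintype.piFinset fun _ : Fin j => Finset.range (k + 1)).filter
          (fun p => ∑ m, (p m + 1) = 0)) = ∅ := by
        refine Finset.filter_false_of_mem fun p _ => ?_
        have : (∑ m, (p m + 1)) = (∑ m, p m) + j := by
          rw [Finset.sum_add_distrib, Finset.sum_const, Finset.card_univ, Fintype.card_fin,
            smul_eq_mul, mul_one]
        omega
      rw [this]
      simp
  · -- 1 ≤ i ≤ k
    have key := hcrec i hi1 hik
    unfold Acoef
    have hsub : Finset.Icc 1 i ⊆ Finset.range (k + 1) := by
      intro j hj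
      rw [Finset.mem_Icc] at hj; rw [Finset.mem_range]; omega
    have hvan : ∀ j ∈ Finset.range (k + 1), j ∉ Finset.Icc 1 i →
        bcoef lam j * ∑ p ∈ (Fintype.piFinset fun _ : Fin j => Finset.range (k + 1)).filter
            (fun p => ∑ m, (p m + 1) = i), ∏ m, c (p m) = 0 := by
      intro j hj hj'
      have hfe : ((Fintype.piFinset fun _ : Fin j => Finset.range (k + 1)).filter
          (fun p => ∑ m, (p m + 1) = i)) = ∅ := by
        refine Finset.filter_false_of_mem fun p _ => ?_
        have hsum : (∑ m, (p m + 1)) = (∑ m, p m) + j := by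
          rw [Finset.sum_add_distrib, Finset.sum_const, Finset.card_univ, Fintype.card_fin,
            smul_eq_mul, mul_one]
        intro hcon
        rw [hsum] at hcon
        rw [Finset.mem_Icc, not_and_or] at hj'
        rcases hj' with h0 | hgt
        · have hj0 : j = 0 := by omega
          subst hj0
          simp only [Finset.univ_eq_empty, Finset.sum_empty] at hcon
          omega
        · omega
      rw [hfe]
      simp
    have hstep : (∑ j ∈ Finset.range (k + 1), bcoef lam j *
        ∑ p ∈ (Fintype.piFinset fun _ : Fin j => Finset.range (k + 1)).filter
            (fun p => ∑ m, (p m + 1) = i), ∏ m, c (p m))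
        = ∑ j ∈ Finset.Icc 1 i, bcoef lam j *
            ∑ p ∈ (Fintype.piFinset fun _ : Fin j => Finset.Icc 1 i).filter
                (fun p => ∑ m, p m = i), ∏ m, c (p m - 1) := by
      rw [← Finset.sum_subset hsub hvan]
      refine Finset.sum_congr rfl fun j hj => ?_
      congr 1
      refine Finset.sum_nbij' (fun p => fun m => p m + 1) (fun q => fun m => q m - 1)
        ?_ ?_ ?_ ?_ ?_
      · intro p hp
        rw [Finset.mem_filter] at hp ⊢
        obtain ⟨hp1, hp2⟩ := hp
        constructor
        · rw [Fintype.mem_piFinset]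
          intro m
          rw [Finset.mem_Icc]
          refine ⟨Nat.le_add_left _ _, ?_⟩
          calc p m + 1 ≤ ∑ m', (p m' + 1) :=
                Finset.single_le_sum (f := fun m' => p m' + 1)
                  (fun _ _ => Nat.zero_le _) (Finset.mem_univ m)
            _ = i := hp2
        · exact hp2
      · intro q hq
        rw [Finset.mem_filter] at hq ⊢
        obtain ⟨hq1, hq2⟩ := hq
        rw [Fintype.mem_piFinset] at hq1
        constructor
        · rw [Fintype.mem_piFinset]
          intro m
          have := hq1 m
          rw [Finset.mem_Icc] at this
          show q m - 1 ∈ Finset.range (k + 1)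
          rw [Finset.mem_range]
          omega
        · show (∑ m, (q m - 1 + 1)) = i
          have : (∑ m, (q m - 1 + 1)) = ∑ m, q m := by
            refine Finset.sum_congr rfl fun m _ => ?_
            have := hq1 m
            rw [Finset.mem_Icc] at this
            omega
          rw [this]; exact hq2
      · intro p _
        funext m
        simp
      · intro q hq
        rw [Finset.mem_filter] at hq
        obtain ⟨hq1, _⟩ := hq
        rw [Fintype.mem_piFinset] at hq1
        funext m
        have := hq1 m
        rw [Finset.mem_Icc] at this
        show q m - 1 + 1 = q m
        omega
      · intro p _
        refine Finset.prod_congr rfl fun m _ => ?_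
        simp
    rw [hstep]
    linarith [key]

private lemma bcoef_zero (μ : ℝ) : bcoef μ 0 = 1 := by simp [bcoef]

private lemma bcoef_succ (μ : ℝ) (j : ℕ) :
    ((j : ℝ) + 1) * bcoef μ (j + 1) = μ * bcoef (μ - 1) j := by
  have hfac : (((j + 1).factorial : ℕ) : ℝ) = ((j : ℝ) + 1) * (j.factorial : ℝ) := by
    rw [Nat.factorial_succ]; push_cast; ring
  have hprod : (∏ m ∈ Finset.range (j + 1), (μ - m)) =
      μ * ∏ m ∈ Finset.range j, ((μ - 1) - m) := by
    rw [Finset.prod_range_succ']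
    simp only [Nat.cast_zero, sub_zero]
    rw [mul_comm]
    congr 1
    refine Finset.prod_congr rfl fun m _ => ?_
    push_cast; ring
  have h1 : ((j.factorial : ℕ) : ℝ) ≠ 0 := by
    exact_mod_cast Nat.factorial_ne_zero j
  have h2 : ((j : ℝ) + 1) ≠ 0 := by positivity
  unfold bcoef
  rw [hprod, hfac]
  field_simp

private lemma abs_pow_sub_pow (u v : ℝ) (hu : |u| ≤ 1) (hv : |v| ≤ 1) :
    ∀ j : ℕ, |u ^ j - v ^ j| ≤ j * |u - v| := by
  intro j
  induction j with
  | zero => simp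
  | succ j ih =>
    have hid : u ^ (j + 1) - v ^ (j + 1) = u * (u ^ j - v ^ j) + (u - v) * v ^ j := by ring
    have hvj : |v ^ j| ≤ 1 := by
      rw [abs_pow]; exact pow_le_one₀ (abs_nonneg v) hv
    calc |u ^ (j + 1) - v ^ (j + 1)| = |u * (u ^ j - v ^ j) + (u - v) * v ^ j| := by rw [hid]
      _ ≤ |u * (u ^ j - v ^ j)| + |(u - v) * v ^ j| := abs_add_le _ _
      _ = |u| * |u ^ j - v ^ j| + |u - v| * |v ^ j| := by rw [abs_mul, abs_mul]
      _ ≤ (↑(j + 1)) * |u - v| := by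
          have h1 : |u| * |u ^ j - v ^ j| ≤ 1 * (j * |u - v|) :=
            mul_le_mul hu ih (abs_nonneg _) zero_le_one
          have h2 : |u - v| * |v ^ j| ≤ |u - v| * 1 :=
            mul_le_mul_of_nonneg_left hvj (abs_nonneg _)
          push_cast
          nlinarith [abs_nonneg (u - v)]

private lemma hasDerivAt_one_add_rpow (μ t : ℝ) (ht : |t| ≤ 1/2) :
    HasDerivAt (fun y : ℝ => (1 + y) ^ μ) (μ * (1 + t) ^ (μ - 1)) t := by
  have h1t : (0 : ℝ) < 1 + t := by
    rcases abs_le.mp ht with ⟨h1, _⟩; linarith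
  have h := (HasDerivAt.rpow_const (f := fun y : ℝ => 1 + y) (f' := 1) (p := μ)
    ((hasDerivAt_id t).const_add 1) (Or.inl h1t.ne'))
  convert h using 1
  ring

private lemma taylor_rpow (k : ℕ) : ∀ μ : ℝ, ∃ M : ℝ, 0 ≤ M ∧ ∀ u : ℝ, |u| ≤ 1/2 →
    |(1 + u) ^ μ - ∑ j ∈ Finset.range (k + 1), bcoef μ j * u ^ j| ≤ M * |u| ^ (k + 1) := by
  induction k with
  | zero =>
    intro μ
    refine ⟨|μ| * ((1/2 : ℝ) ^ (μ - 1) + (3/2 : ℝ) ^ (μ - 1)), by positivity, ?_⟩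
    intro u hu
    have hsum : (∑ j ∈ Finset.range 1, bcoef μ j * u ^ j) = 1 := by
      simp [bcoef_zero]
    rw [hsum]
    have key := Convex.norm_image_sub_le_of_norm_hasDerivWithin_le
      (f := fun y : ℝ => (1 + y) ^ μ) (f' := fun t => μ * (1 + t) ^ (μ - 1))
      (s := Set.Icc (-(1/2) : ℝ) (1/2))
      (C := |μ| * ((1/2 : ℝ) ^ (μ - 1) + (3/2 : ℝ) ^ (μ - 1)))
      (x := 0) (y := u)
      (fun t ht => (hasDerivAt_one_add_rpow μ t (abs_le.mpr ⟨ht.1, ht.2⟩)).hasDerivWithinAt)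
      ?_ (convex_Icc _ _) ?_ ?_
    · have h0 : ((1 : ℝ) + 0) ^ μ = 1 := by norm_num
      simpa [h0] using key
    · intro t ht
      have h1 : (1 : ℝ)/2 ≤ 1 + t := by linarith [ht.1]
      have h2 : 1 + t ≤ 3/2 := by linarith [ht.2]
      have h1t : (0 : ℝ) < 1 + t := by linarith
      rw [Real.norm_eq_abs, abs_mul, abs_of_pos (Real.rpow_pos_of_pos h1t _)]
      have hb : (1 + t) ^ (μ - 1) ≤ (1/2 : ℝ) ^ (μ - 1) + (3/2 : ℝ) ^ (μ - 1) := by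
        rcases le_or_gt 0 (μ - 1) with hmu | hmu
        · have := Real.rpow_le_rpow h1t.le h2 hmu
          have h' : (0:ℝ) < (1/2 : ℝ) ^ (μ - 1) := Real.rpow_pos_of_pos (by norm_num) _
          linarith
        · have := Real.rpow_le_rpow_of_nonpos (by norm_num : (0:ℝ) < 1/2) h1 hmu.le
          have h' : (0:ℝ) < (3/2 : ℝ) ^ (μ - 1) := Real.rpow_pos_of_pos (by norm_num) _
          linarith
      exact mul_le_mul_of_nonneg_left hb (abs_nonneg μ)
    · exact ⟨by norm_num, by norm_num⟩
    · exact ⟨by linarith [abs_le.mp hu |>.1], by linarith [abs_le.mp hu |>.2]⟩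
  | succ k ih =>
    intro μ
    obtain ⟨M, hM0, hM⟩ := ih (μ - 1)
    refine ⟨|μ| * M, by positivity, ?_⟩
    intro u hu
    have habs : ∀ t : ℝ, t ∈ Set.Icc (-|u|) (|u|) → |t| ≤ 1/2 := by
      intro t ht
      rw [abs_le]; exact ⟨by linarith [ht.1, (abs_le.mp hu).1, abs_nonneg u],
        le_trans ht.2 hu⟩
    -- derivative identity for the polynomial part
    have hpolyder : ∀ t : ℝ,
        (∑ j ∈ Finset.range (k + 2), bcoef μ j * ((j : ℝ) * t ^ (j - 1)))
          = μ * ∑ j ∈ Finset.range (k + 1), bcoef (μ - 1) j * t ^ j := by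
      intro t
      rw [Finset.sum_range_succ']
      simp only [Nat.cast_zero, zero_mul, mul_zero, add_zero]
      rw [Finset.mul_sum]
      refine Finset.sum_congr rfl fun j _ => ?_
      have : ((j : ℝ) + 1) * bcoef μ (j + 1) = μ * bcoef (μ - 1) j := bcoef_succ μ j
      push_cast
      linear_combination t ^ j * this
    have key := Convex.norm_image_sub_le_of_norm_hasDerivWithin_le
      (f := fun y : ℝ => (1 + y) ^ μ - ∑ j ∈ Finset.range (k + 2), bcoef μ j * y ^ j)
      (f' := fun t => μ * ((1 + t) ^ (μ - 1) - ∑ j ∈ Finset.range (k + 1), bcoef (μ - 1) j * t ^ j))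
      (s := Set.Icc (-|u|) (|u|)) (C := |μ| * M * |u| ^ (k + 1))
      (x := 0) (y := u)
      ?_ ?_ (convex_Icc _ _) (Set.mem_Icc.mpr ⟨by simpa using abs_nonneg u, abs_nonneg u⟩)
      (Set.mem_Icc.mpr ⟨neg_abs_le u, le_abs_self u⟩)
    · have h0 : (∑ j ∈ Finset.range (k + 2), bcoef μ j * (0:ℝ) ^ j) = 1 := by
        rw [Finset.sum_eq_single_of_mem 0 (by simp)]
        · simp [bcoef_zero]
        · intro b _ hb; simp [zero_pow hb]
      have key' : |(1 + u) ^ μ - ∑ j ∈ Finset.range (k + 2), bcoef μ j * u ^ j|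
          ≤ |μ| * M * |u| ^ (k + 1) * |u| := by
        simpa [h0, Real.norm_eq_abs] using key
      calc |(1 + u) ^ μ - ∑ j ∈ Finset.range (k + 2), bcoef μ j * u ^ j|
          ≤ |μ| * M * |u| ^ (k + 1) * |u| := key'
        _ = |μ| * M * |u| ^ (k + 2) := by ring
    · intro t ht
      have ht' := habs t ht
      have hd2 : HasDerivAt (fun y : ℝ => ∑ j ∈ Finset.range (k + 2), bcoef μ j * y ^ j)
          (∑ j ∈ Finset.range (k + 2), bcoef μ j * ((j : ℝ) * t ^ (j - 1))) t :=
        HasDerivAt.fun_sum fun j _ => (hasDerivAt_pow j t).const_mul (bcoef μ j)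
      have hd1 := (hasDerivAt_one_add_rpow μ t ht').fun_sub hd2
      have : (μ * (1 + t) ^ (μ - 1) -
          ∑ j ∈ Finset.range (k + 2), bcoef μ j * ((j : ℝ) * t ^ (j - 1)))
          = μ * ((1 + t) ^ (μ - 1) - ∑ j ∈ Finset.range (k + 1), bcoef (μ - 1) j * t ^ j) := by
        rw [hpolyder t]; ring
      convert hd1.hasDerivWithinAt using 1
      exact this.symm
    · intro t ht
      have ht' := habs t ht
      rw [Real.norm_eq_abs, abs_mul]
      have h1 := hM t ht'
      have h2 : |t| ^ (k + 1) ≤ |u| ^ (k + 1) :=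
        pow_le_pow_left₀ (abs_nonneg t) (abs_le.mpr ⟨by linarith [ht.1], ht.2⟩) _
      calc |μ| * |(1 + t) ^ (μ - 1) - ∑ j ∈ Finset.range (k + 1), bcoef (μ - 1) j * t ^ j|
          ≤ |μ| * (M * |t| ^ (k + 1)) := mul_le_mul_of_nonneg_left h1 (abs_nonneg μ)
        _ ≤ |μ| * (M * |u| ^ (k + 1)) := by
            have := mul_le_mul_of_nonneg_left h2 hM0
            exact mul_le_mul_of_nonneg_left this (abs_nonneg μ)
        _ = |μ| * M * |u| ^ (k + 1) := by ring

set_option maxHeartbeats 1000000 in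
private lemma core (lam : ℝ) (k : ℕ) (hl0 : 0 < lam) (hl1 : lam < 1)
    (hhi : lam ≤ ((k : ℝ) + 1) / (k + 2)) (C β : ℝ) (hC : 0 < C) (c : ℕ → ℝ)
    (hA : ∀ i ≤ k, Acoef lam C k c i = - c i) :
    ∃ D : ℝ, ∀ᶠ L : ℝ in atTop,
      0 < L + β * Real.log L + ∑ i ∈ Finset.range (k + 1), c i * L ^ (ee lam i) ∧
      C * (L + β * Real.log L + ∑ i ∈ Finset.range (k + 1), c i * L ^ (ee lam i)) ^ lam
        + (∑ i ∈ Finset.range (k + 1), c i * L ^ (ee lam i))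
        + β * (Real.log L
            - Real.log (L + β * Real.log L + ∑ i ∈ Finset.range (k + 1), c i * L ^ (ee lam i)))
        ≤ D := by
  obtain ⟨M, hM0, hM⟩ := taylor_rpow k lam
  set K₁ : ℝ := ∑ i ∈ Finset.range (k + 1), |c i| with hK₁
  have hK₁0 : 0 ≤ K₁ := Finset.sum_nonneg fun i _ => abs_nonneg _
  set K₂ : ℝ := K₁ + |β| / lam with hK₂
  have hK₂0 : 0 ≤ K₂ := by
    have h9 : 0 ≤ |β| / lam := div_nonneg (abs_nonneg β) hl0.le
    rw [hK₂]
    linarith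
  set B : ℝ := ∑ j ∈ Finset.range (k + 1), |bcoef lam j| * j with hB
  have hB0 : 0 ≤ B := Finset.sum_nonneg fun j _ => by positivity
  set N : ℕ := k * (k + 1) + 1 with hN
  set D3 : ℝ := ∑ i ∈ Finset.Ico (k + 1) N, |Acoef lam C k c i| with hD3
  refine ⟨C * M * K₂ ^ (k + 1) + 1 + D3 + 1, ?_⟩
  have htend : ∀ (K ε δ : ℝ), ε < 0 → 0 < δ → ∀ᶠ L : ℝ in atTop, K * L ^ ε ≤ δ := by
    intro K ε δ hε hδ
    have h1 : Tendsto (fun L : ℝ => K * L ^ ε) atTop (𝓝 (K * 0)) := by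
      have h2 := (tendsto_rpow_neg_atTop (y := -ε) (by linarith)).const_mul K
      simpa using h2
    rw [mul_zero] at h1
    exact h1.eventually_le_const hδ
  have ev1 : ∀ᶠ L : ℝ in atTop, (1 : ℝ) ≤ L := eventually_ge_atTop 1
  have ev2 : ∀ᶠ L : ℝ in atTop, K₂ * L ^ (lam - 1) ≤ 1 / 2 :=
    htend _ _ _ (by linarith) (by norm_num)
  have ev3 : ∀ᶠ L : ℝ in atTop,
      (C * B * |β| * (2 / (1 - lam))) * L ^ ((lam - 1) / 2) ≤ 1 :=
    htend _ _ _ (by linarith) one_pos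
  have ev4 : ∀ᶠ L : ℝ in atTop, (2 * |β| * K₂) * L ^ (lam - 1) ≤ 1 :=
    htend _ _ _ (by linarith) one_pos
  filter_upwards [ev1, ev2, ev3, ev4] with L hL1 hE2 hE3 hE4
  have hL : (0 : ℝ) < L := lt_of_lt_of_le one_pos hL1
  have hLlam : 0 < L ^ lam := Real.rpow_pos_of_pos hL _
  set φ : ℝ := ∑ i ∈ Finset.range (k + 1), c i * L ^ (ee lam i) with hφ
  set u : ℝ := (β * Real.log L + φ) / L with hu
  set v : ℝ := φ / L with hv
  have hlog0 : 0 ≤ Real.log L := Real.log_nonneg hL1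
  have hφb : |φ| ≤ K₁ * L ^ lam := by
    rw [hφ, hK₁, Finset.sum_mul]
    refine (Finset.abs_sum_le_sum_abs _ _).trans (Finset.sum_le_sum fun i _ => ?_)
    rw [abs_mul, abs_of_pos (Real.rpow_pos_of_pos hL _)]
    refine mul_le_mul_of_nonneg_left ?_ (abs_nonneg _)
    refine Real.rpow_le_rpow_of_exponent_le hL1 ?_
    unfold ee
    nlinarith [Nat.cast_nonneg (α := ℝ) i]
  have hlogb : |β| * Real.log L ≤ (|β| / lam) * L ^ lam := by
    have h1 := Real.log_le_sub_one_of_pos (Real.rpow_pos_of_pos hL lam)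
    rw [Real.log_rpow hL] at h1
    have h2 : Real.log L ≤ L ^ lam / lam := by
      rw [le_div_iff₀ hl0]
      nlinarith [Real.rpow_pos_of_pos hL lam]
    calc |β| * Real.log L ≤ |β| * (L ^ lam / lam) :=
          mul_le_mul_of_nonneg_left h2 (abs_nonneg β)
      _ = (|β| / lam) * L ^ lam := by ring
  have hLpow : L ^ lam / L = L ^ (lam - 1) := by
    rw [Real.rpow_sub hL, Real.rpow_one]
  have hnum : |β * Real.log L + φ| ≤ K₂ * L ^ lam := by
    calc |β * Real.log L + φ| ≤ |β * Real.log L| + |φ| := abs_add_le _ _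
      _ ≤ |β| * Real.log L + K₁ * L ^ lam := by
          rw [abs_mul, abs_of_nonneg hlog0]
          exact add_le_add_right hφb _
      _ ≤ (|β| / lam) * L ^ lam + K₁ * L ^ lam := add_le_add_left hlogb _
      _ = K₂ * L ^ lam := by rw [hK₂]; ring
  have hub : |u| ≤ K₂ * L ^ (lam - 1) := by
    rw [hu, abs_div, abs_of_pos hL]
    calc |β * Real.log L + φ| / L ≤ (K₂ * L ^ lam) / L := by
          gcongr
      _ = K₂ * L ^ (lam - 1) := by rw [mul_div_assoc, hLpow]
  have hvb : |v| ≤ K₂ * L ^ (lam - 1) := by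
    rw [hv, abs_div, abs_of_pos hL]
    have hφb2 : |φ| ≤ K₂ * L ^ lam := by
      refine hφb.trans (mul_le_mul_of_nonneg_right ?_ hLlam.le)
      rw [hK₂]
      have : 0 ≤ |β| / lam := div_nonneg (abs_nonneg β) hl0.le
      linarith
    calc |φ| / L ≤ (K₂ * L ^ lam) / L := by
          gcongr
      _ = K₂ * L ^ (lam - 1) := by rw [mul_div_assoc, hLpow]
  have hu2 : |u| ≤ 1 / 2 := hub.trans hE2
  have hv2 : |v| ≤ 1 / 2 := hvb.trans hE2
  have hu1 : |u| ≤ 1 := hu2.trans (by norm_num)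
  have hv1 : |v| ≤ 1 := hv2.trans (by norm_num)
  have h1u : 0 < 1 + u := by
    have := (abs_le.mp hu2).1; linarith
  have hTu : L + β * Real.log L + φ = L * (1 + u) := by
    rw [hu]
    field_simp
    ring
  have hT0 : 0 < L + β * Real.log L + φ := by
    rw [hTu]; exact mul_pos hL h1u
  refine ⟨hT0, ?_⟩
  set P : ℝ → ℝ := fun x => ∑ j ∈ Finset.range (k + 1), bcoef lam j * x ^ j with hP
  have hdecomp : C * (L + β * Real.log L + φ) ^ lam + φ
      + β * (Real.log L - Real.log (L + β * Real.log L + φ))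
      = (C * L ^ lam * ((1 + u) ^ lam - P u))
        + (C * L ^ lam * (P u - P v))
        + (C * L ^ lam * P v + φ)
        + (β * (Real.log L - Real.log (L + β * Real.log L + φ))) := by
    rw [hTu, Real.mul_rpow hL.le h1u.le]
    ring
  have ht1 : C * L ^ lam * ((1 + u) ^ lam - P u) ≤ C * M * K₂ ^ (k + 1) := by
    have h1 := hM u hu2
    have hL1pow : L ^ lam * (K₂ * L ^ (lam - 1)) ^ (k + 1) ≤ K₂ ^ (k + 1) := by
      have hpows : L ^ lam * (L ^ (lam - 1)) ^ (k + 1) = L ^ (lam + (lam - 1) * ((k : ℝ) + 1)) := by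
        rw [← Real.rpow_natCast (L ^ (lam - 1)) (k + 1), ← Real.rpow_mul hL.le,
          ← Real.rpow_add hL]
        push_cast
        ring_nf
      have hexp : lam + (lam - 1) * ((k : ℝ) + 1) ≤ 0 := by
        have h2 : lam * ((k : ℝ) + 2) ≤ (k : ℝ) + 1 := (le_div_iff₀ (by positivity)).mp hhi
        nlinarith
      have hle1 : L ^ (lam + (lam - 1) * ((k : ℝ) + 1)) ≤ 1 :=
        Real.rpow_le_one_of_one_le_of_nonpos hL1 hexp
      calc L ^ lam * (K₂ * L ^ (lam - 1)) ^ (k + 1)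
          = K₂ ^ (k + 1) * (L ^ lam * (L ^ (lam - 1)) ^ (k + 1)) := by
            rw [mul_pow]; ring
        _ = K₂ ^ (k + 1) * L ^ (lam + (lam - 1) * ((k : ℝ) + 1)) := by rw [hpows]
        _ ≤ K₂ ^ (k + 1) * 1 := mul_le_mul_of_nonneg_left hle1 (pow_nonneg hK₂0 _)
        _ = K₂ ^ (k + 1) := mul_one _
    calc C * L ^ lam * ((1 + u) ^ lam - P u)
        ≤ |C * L ^ lam * ((1 + u) ^ lam - P u)| := le_abs_self _
      _ = C * L ^ lam * |(1 + u) ^ lam - P u| := by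
          rw [abs_mul, abs_mul, abs_of_pos hC, abs_of_pos hLlam]
      _ ≤ C * L ^ lam * (M * |u| ^ (k + 1)) :=
          mul_le_mul_of_nonneg_left h1 (by positivity)
      _ ≤ C * L ^ lam * (M * (K₂ * L ^ (lam - 1)) ^ (k + 1)) := by
          refine mul_le_mul_of_nonneg_left (mul_le_mul_of_nonneg_left ?_ hM0) (by positivity)
          exact pow_le_pow_left₀ (abs_nonneg u) hub _
      _ = C * M * (L ^ lam * (K₂ * L ^ (lam - 1)) ^ (k + 1)) := by ring
      _ ≤ C * M * K₂ ^ (k + 1) :=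
          mul_le_mul_of_nonneg_left hL1pow (by positivity)
  have ht2 : C * L ^ lam * (P u - P v) ≤ 1 := by
    have hPuv : |P u - P v| ≤ B * |u - v| := by
      rw [hP, hB]
      simp only
      rw [← Finset.sum_sub_distrib, Finset.sum_mul]
      refine (Finset.abs_sum_le_sum_abs _ _).trans (Finset.sum_le_sum fun j _ => ?_)
      rw [← mul_sub, abs_mul]
      calc |bcoef lam j| * |u ^ j - v ^ j| ≤ |bcoef lam j| * (j * |u - v|) :=
            mul_le_mul_of_nonneg_left (abs_pow_sub_pow u v hu1 hv1 j) (abs_nonneg _)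
        _ = |bcoef lam j| * j * |u - v| := by ring
    have huv : u - v = β * Real.log L / L := by
      rw [hu, hv]; ring
    have hlogbound : Real.log L ≤ (2 / (1 - lam)) * L ^ ((1 - lam) / 2) := by
      have h1 := Real.log_le_sub_one_of_pos (Real.rpow_pos_of_pos hL ((1 - lam) / 2))
      rw [Real.log_rpow hL] at h1
      have hpos := Real.rpow_pos_of_pos hL ((1 - lam) / 2)
      rw [div_mul_eq_mul_div, le_div_iff₀ (by linarith : (0:ℝ) < 1 - lam)]
      nlinarith
    have hpows2 : L ^ lam * L ^ ((1 - lam) / 2) / L = L ^ ((lam - 1) / 2) := by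
      rw [← Real.rpow_add hL,
        show (lam - 1) / 2 = (lam + (1 - lam) / 2) - 1 by ring, Real.rpow_sub hL, Real.rpow_one]
    have habsuv : |u - v| = |β| * Real.log L / L := by
      rw [huv, abs_div, abs_mul, abs_of_nonneg hlog0, abs_of_pos hL]
    calc C * L ^ lam * (P u - P v)
        ≤ |C * L ^ lam * (P u - P v)| := le_abs_self _
      _ = C * L ^ lam * |P u - P v| := by
          rw [abs_mul, abs_mul, abs_of_pos hC, abs_of_pos hLlam]
      _ ≤ C * L ^ lam * (B * (|β| * Real.log L / L)) := by
          rw [← habsuv]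
          exact mul_le_mul_of_nonneg_left hPuv (by positivity)
      _ = (C * B * |β|) * (L ^ lam * Real.log L / L) := by ring
      _ ≤ (C * B * |β|) * ((2 / (1 - lam)) * (L ^ lam * L ^ ((1 - lam) / 2) / L)) := by
          refine mul_le_mul_of_nonneg_left ?_ (by positivity)
          have hmono : L ^ lam * Real.log L / L ≤ L ^ lam * ((2 / (1 - lam)) * L ^ ((1 - lam) / 2)) / L := by
            gcongr
          exact hmono.trans_eq (by ring)
      _ = (C * B * |β| * (2 / (1 - lam))) * L ^ ((lam - 1) / 2) := by
          rw [hpows2]; ring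
      _ ≤ 1 := hE3
  have ht3 : C * L ^ lam * P v + φ ≤ D3 := by
    have hexpand := expand lam k c C L hL
    have heq : C * L ^ lam * P v = ∑ i ∈ Finset.range N, Acoef lam C k c i * L ^ (ee lam i) := by
      rw [hP, hv, hφ, hN]
      exact hexpand
    have hφA : (∑ i ∈ Finset.range (k + 1), Acoef lam C k c i * L ^ (ee lam i)) = - φ := by
      rw [hφ, ← Finset.sum_neg_distrib]
      refine Finset.sum_congr rfl fun i hi => ?_
      rw [hA i (by rw [Finset.mem_range] at hi; omega)]
      ring
    have hkN : k + 1 ≤ N := by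
      rw [hN]
      have : k ≤ k * (k + 1) := Nat.le_mul_of_pos_right k (Nat.succ_pos k)
      omega
    have hIco := Finset.sum_Ico_eq_sub (fun i => Acoef lam C k c i * L ^ (ee lam i)) hkN
    have hsum : C * L ^ lam * P v + φ
        = ∑ i ∈ Finset.Ico (k + 1) N, Acoef lam C k c i * L ^ (ee lam i) := by
      rw [heq, hIco]
      linarith [hφA]
    rw [hsum, hD3]
    refine Finset.sum_le_sum fun i hi => ?_
    have hee : ee lam i ≤ 0 := by
      rw [Finset.mem_Ico] at hi
      have hi1 : (k : ℝ) + 1 ≤ (i : ℝ) := by exact_mod_cast hi.1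
      have h2 : lam * ((k : ℝ) + 2) ≤ (k : ℝ) + 1 := (le_div_iff₀ (by positivity)).mp hhi
      have h3 : ((i : ℝ) - k - 1) * lam ≤ ((i : ℝ) - k - 1) * 1 :=
        mul_le_mul_of_nonneg_left hl1.le (by linarith)
      unfold ee
      nlinarith
    calc Acoef lam C k c i * L ^ (ee lam i)
        ≤ |Acoef lam C k c i| * L ^ (ee lam i) :=
          mul_le_mul_of_nonneg_right (le_abs_self _) (Real.rpow_pos_of_pos hL _).le
      _ ≤ |Acoef lam C k c i| * 1 :=
          mul_le_mul_of_nonneg_left (Real.rpow_le_one_of_one_le_of_nonpos hL1 hee) (abs_nonneg _)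
      _ = |Acoef lam C k c i| := mul_one _
  have ht4 : β * (Real.log L - Real.log (L + β * Real.log L + φ)) ≤ 1 := by
    have hlogT : Real.log (L + β * Real.log L + φ) = Real.log L + Real.log (1 + u) := by
      rw [hTu, Real.log_mul hL.ne' h1u.ne']
    have habslog : |Real.log (1 + u)| ≤ 2 * |u| := by
      have hup : Real.log (1 + u) ≤ u := by
        have := Real.log_le_sub_one_of_pos h1u; linarith
      have hlow : - Real.log (1 + u) ≤ 2 * |u| := by
        have h1 := Real.log_le_sub_one_of_pos (inv_pos.mpr h1u)
        rw [Real.log_inv] at h1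
        have h2 : (1 + u) * (1 + u)⁻¹ = 1 := mul_inv_cancel₀ h1u.ne'
        have h3 : (1 : ℝ) / 2 ≤ 1 + u := by
          have := (abs_le.mp hu2).1; linarith
        nlinarith [abs_nonneg u, neg_abs_le u, le_abs_self u]
      rw [abs_le]
      constructor
      · linarith
      · have := le_abs_self u
        have := abs_nonneg u
        linarith
    calc β * (Real.log L - Real.log (L + β * Real.log L + φ))
        = - (β * Real.log (1 + u)) := by rw [hlogT]; ring
      _ ≤ |β * Real.log (1 + u)| := neg_le_abs _
      _ = |β| * |Real.log (1 + u)| := abs_mul _ _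
      _ ≤ |β| * (2 * |u|) := mul_le_mul_of_nonneg_left habslog (abs_nonneg β)
      _ ≤ |β| * (2 * (K₂ * L ^ (lam - 1))) := by
          refine mul_le_mul_of_nonneg_left ?_ (abs_nonneg β)
          linarith [hub]
      _ = (2 * |β| * K₂) * L ^ (lam - 1) := by ring
      _ ≤ 1 := hE4
  rw [hdecomp]
  linarith [ht1, ht2, ht3, ht4]


/-- Verification of the bandwidth equation in the case `r < s`:
with the recursively defined coefficients `c_i`, the bandwidth
`h n = (2b)^{1/s} [log n + (α/s) log log n + Σ_{i=0}^k c_i (log n)^{(i+1)λ-i}]^{-1/s}`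
satisfies `exp(2b/h^s + 2a/h^r) h^α = O(n)` with `r = λ s`. -/
theorem stmt8 (lam : ℝ) (k : ℕ) (hl0 : 0 < lam) (hl1 : lam < 1)
    (hlo : (k : ℝ) / (k + 1) < lam) (hhi : lam ≤ ((k : ℝ) + 1) / (k + 2))
    (a b s α : ℝ) (ha : 0 < a) (hb : 0 < b) (hs : 0 < s)
    (r : ℝ) (hr : r = lam * s)
    (c : ℕ → ℝ)
    (hc0 : c 0 = -(2 * a) / (2 * b) ^ lam)
    (hck : c (k + 1) = 0)
    (hcrec : ∀ i : ℕ, 1 ≤ i → i ≤ k →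
      c i + ((2 * a) / (2 * b) ^ lam) *
        (∑ j ∈ Finset.Icc 1 i,
          ((∏ m ∈ Finset.range j, (lam - m)) / (Nat.factorial j)) *
          ∑ p ∈ (Fintype.piFinset fun _ : Fin j => Finset.Icc 1 i).filter
              (fun p => ∑ m, p m = i),
            ∏ m, c (p m - 1)) = 0)
    (h : ℕ → ℝ)
    (hh : ∀ n : ℕ, h n = (2 * b) ^ (1/s) *
      (Real.log n + (α/s) * Real.log (Real.log n)
        + ∑ i ∈ Finset.range (k + 1),
            c i * (Real.log n) ^ (((i : ℝ) + 1) * lam - (i : ℝ))) ^ (-(1/s))) :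
    (fun n : ℕ => Real.exp (2*b / (h n) ^ s + 2*a / (h n) ^ r) * (h n) ^ α)
      =O[atTop] (fun n : ℕ => (n : ℝ)) := by
  have hb2 : (0:ℝ) < 2 * b := by linarith
  have h2bl : (0:ℝ) < (2*b) ^ lam := Real.rpow_pos_of_pos hb2 _
  set C : ℝ := (2*a) / (2*b) ^ lam with hCdef
  have hC : 0 < C := div_pos (by linarith) h2bl
  have hc0' : c 0 = -C := by rw [hc0, hCdef]; ring
  have hcrec' : ∀ i : ℕ, 1 ≤ i → i ≤ k →
      c i + C * (∑ j ∈ Finset.Icc 1 i, bcoef lam j *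
        ∑ p ∈ (Fintype.piFinset fun _ : Fin j => Finset.Icc 1 i).filter
            (fun p => ∑ m, p m = i), ∏ m, c (p m - 1)) = 0 := by
    intro i h1 h2
    have h3 := hcrec i h1 h2
    simpa [bcoef, hCdef] using h3
  have hA := Acoef_eq lam C k c hc0' hcrec'
  obtain ⟨D, hD⟩ := core lam k hl0 hl1 hhi C (α/s) hC c hA
  rw [Asymptotics.isBigO_iff]
  refine ⟨(2*b) ^ (α/s) * Real.exp D, ?_⟩
  have hlogt : Tendsto (fun n : ℕ => Real.log n) atTop atTop :=
    Real.tendsto_log_atTop.comp tendsto_natCast_atTop_atTop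
  filter_upwards [hlogt.eventually hD, eventually_ge_atTop 1] with n hn hn1
  obtain ⟨hT0, hTD⟩ := hn
  set L : ℝ := Real.log n with hLdef
  set Tv : ℝ := L + α / s * Real.log L + ∑ i ∈ Finset.range (k+1), c i * L ^ (ee lam i)
    with hTvdef
  have hn0 : (0:ℝ) < n := by exact_mod_cast Nat.lt_of_lt_of_le Nat.zero_lt_one hn1
  have hhn : h n = (2*b) ^ (1/s) * Tv ^ (-(1/s)) := by
    rw [hh n, hTvdef]
    rfl
  have hs0 : s ≠ 0 := hs.ne'
  have hTpow : ∀ q : ℝ, (h n) ^ q = (2*b) ^ (q/s) * Tv ^ (-(q/s)) := by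
    intro q
    rw [hhn, Real.mul_rpow (Real.rpow_pos_of_pos hb2 _).le (Real.rpow_pos_of_pos hT0 _).le,
      ← Real.rpow_mul hb2.le, ← Real.rpow_mul hT0.le,
      show 1/s*q = q/s from by ring, show -(1/s)*q = -(q/s) from by ring]
  have hhs : 2*b / (h n) ^ s = Tv := by
    rw [hTpow s, div_self hs0, Real.rpow_one, Real.rpow_neg_one]
    field_simp
  have hhr : 2*a / (h n) ^ r = C * Tv ^ lam := by
    rw [hr, hTpow (lam * s), show lam * s / s = lam from by field_simp,
      Real.rpow_neg hT0.le, hCdef]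
    have hTl : (0:ℝ) < Tv ^ lam := Real.rpow_pos_of_pos hT0 _
    field_simp
  have hha : (h n) ^ α = (2*b) ^ (α/s) * Real.exp (Real.log Tv * (-(α/s))) := by
    rw [hTpow α, Real.rpow_def_of_pos hT0]
  have hval : Real.exp (2*b/(h n)^s + 2*a/(h n)^r) * (h n)^α
      = (2*b) ^ (α/s) * Real.exp (Tv + C * Tv ^ lam - α/s * Real.log Tv) := by
    rw [hhs, hhr, hha,
      mul_comm ((2*b) ^ (α/s)) (Real.exp (Real.log Tv * (-(α/s)))), ← mul_assoc,
      ← Real.exp_add,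
      show Tv + C * Tv ^ lam + Real.log Tv * (-(α/s))
        = Tv + C * Tv ^ lam - α/s * Real.log Tv from by ring]
    exact mul_comm _ _
  have hkey : Tv + C * Tv ^ lam - α/s * Real.log Tv ≤ L + D := by
    have hid : Tv + C * Tv ^ lam - α/s * Real.log Tv
        = L + (C * Tv ^ lam + (∑ i ∈ Finset.range (k+1), c i * L ^ (ee lam i))
            + α/s * (Real.log L - Real.log Tv)) := by
      rw [hTvdef]; ring
    rw [hid]
    linarith [hTD]
  rw [hval, Real.norm_eq_abs, Real.norm_eq_abs]
  rw [abs_of_pos (by positivity), abs_of_pos hn0]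
  calc (2*b) ^ (α/s) * Real.exp (Tv + C * Tv ^ lam - α/s * Real.log Tv)
      ≤ (2*b) ^ (α/s) * Real.exp (L + D) := by
        refine mul_le_mul_of_nonneg_left (Real.exp_le_exp.mpr hkey) (Real.rpow_pos_of_pos hb2 _).le
    _ = (2*b) ^ (α/s) * Real.exp D * (n:ℝ) := by
        rw [Real.exp_add, hLdef, Real.exp_log hn0]; ring
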